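/- arXiv:2203.16673 — 2 statements merged into one kernel-verified Lean document; each statement's English description precedes it below -/
import Mathlib

section
/- Let V₁ ∈ ℝ^{n×R} and V₂ ∈ ℝ^{m×R} have orthonormal columns and let Δ ∈ ℝ^{n×m}. If ‖P_W(Δ)‖_* ≤ 3‖P_V(Δ)‖_*, then ‖Δ‖_F ≤ 5√R · ‖Δ‖. -/
open MeasureTheory ProbabilityTheory Matrix

noncomputable section

def eNorm {ι : Type*} [Fintype ι] (x : ι → ℝ) : ℝ := Real.sqrt (∑ i, x i ^ 2)

def eInner {ι : Type*} [Fintype ι] (x y : ι → ℝ) : ℝ := ∑ i, x i * y i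

def frobNorm {m n : Type*} [Fintype m] [Fintype n] (A : Matrix m n ℝ) : ℝ :=
  Real.sqrt (∑ i, ∑ j, A i j ^ 2)

def frobInner {m n : Type*} [Fintype m] [Fintype n] (A B : Matrix m n ℝ) : ℝ :=
  ∑ i, ∑ j, A i j * B i j

def specNorm {m n : Type*} [Fintype m] [Fintype n] (A : Matrix m n ℝ) : ℝ :=
  sSup {c | ∃ x : n → ℝ, eNorm x ≤ 1 ∧ c = eNorm (A.mulVec x)}

def nucNorm {m n : Type*} [Fintype m] [Fintype n] [DecidableEq n] (A : Matrix m n ℝ) : ℝ :=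
  ∑ i, Real.sqrt ((Matrix.isHermitian_conjTranspose_mul_self A).eigenvalues i)

def hankel {n : ℕ} (v : Fin (2*n-1) → ℝ) : Matrix (Fin n) (Fin n) ℝ :=
  Matrix.of fun j k => v ⟨(j:ℕ) + k, by omega⟩

def Kw (n : ℕ) (j : Fin (2*n-1)) : ℝ :=
  if (j:ℕ) + 1 ≤ n then Real.sqrt ((j:ℕ) + 1) else Real.sqrt (2*n - ((j:ℕ)+1))

def wHankel {n p : ℕ} (β : Fin (2*n-1) × Fin p → ℝ) : Matrix (Fin n) (Fin n × Fin p) ℝ :=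
  Matrix.of fun j kl => β (⟨(j:ℕ) + kl.1, by omega⟩, kl.2) / Kw n ⟨(j:ℕ) + kl.1, by omega⟩

def blockHankel {n p : ℕ} (h : Fin (2*n-1) × Fin p → ℝ) : Matrix (Fin n) (Fin n × Fin p) ℝ :=
  Matrix.of fun j kl => h (⟨(j:ℕ) + kl.1, by omega⟩, kl.2)

def stdGaussian (ι : Type*) [Fintype ι] : Measure (ι → ℝ) :=
  Measure.pi fun _ => gaussianReal 0 1

def gaussWidth {ι : Type*} [Fintype ι] (S : Set (ι → ℝ)) : ℝ :=
  ∫ g, sSup ((fun γ => eInner γ g) '' S) ∂ stdGaussian ι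


/-! ### Auxiliary lemmas -/

lemma eNorm_nonneg' {ι : Type*} [Fintype ι] (x : ι → ℝ) : 0 ≤ eNorm x := Real.sqrt_nonneg _

lemma eNorm_sq' {ι : Type*} [Fintype ι] (x : ι → ℝ) : eNorm x ^ 2 = ∑ i, x i ^ 2 :=
  Real.sq_sqrt (by positivity)

lemma eNorm_le_of_sq_le {ι κ : Type*} [Fintype ι] [Fintype κ] {x : ι → ℝ} {y : κ → ℝ}
    (h : eNorm x ^ 2 ≤ eNorm y ^ 2) : eNorm x ≤ eNorm y :=
  le_of_pow_le_pow_left₀ two_ne_zero (eNorm_nonneg' y) h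

lemma eNorm_eq_norm {ι : Type*} [Fintype ι] (x : ι → ℝ) :
    eNorm x = ‖(WithLp.equiv 2 (ι → ℝ)).symm x‖ := by
  rw [EuclideanSpace.norm_eq]
  simp [eNorm, Real.norm_eq_abs, sq_abs]

lemma eNorm_add_le {ι : Type*} [Fintype ι] (x y : ι → ℝ) :
    eNorm (x + y) ≤ eNorm x + eNorm y := by
  simp only [eNorm_eq_norm]
  exact norm_add_le _ _

lemma eNorm_smul' {ι : Type*} [Fintype ι] (c : ℝ) (x : ι → ℝ) :
    eNorm (c • x) = |c| * eNorm x := by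
  simp only [eNorm_eq_norm]
  rw [show (WithLp.equiv 2 (ι → ℝ)).symm (c • x) = c • (WithLp.equiv 2 (ι → ℝ)).symm x from rfl,
    norm_smul, Real.norm_eq_abs]

lemma eNorm_eq_zero' {ι : Type*} [Fintype ι] {x : ι → ℝ} (h : eNorm x = 0) : x = 0 := by
  have h2 : ∑ i, x i ^ 2 = 0 := by
    have := eNorm_sq' x; rw [h] at this; linarith [this.symm]
  funext i
  have := (Finset.sum_eq_zero_iff_of_nonneg (fun i _ => sq_nonneg (x i))).mp h2 i
    (Finset.mem_univ i)
  exact pow_eq_zero_iff two_ne_zero |>.mp this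

lemma specSet_bddAbove {m n : Type*} [Fintype m] [Fintype n] (A : Matrix m n ℝ) :
    BddAbove {c | ∃ x : n → ℝ, eNorm x ≤ 1 ∧ c = eNorm (A.mulVec x)} := by
  refine ⟨frobNorm A, ?_⟩
  rintro c ⟨x, hx, rfl⟩
  have hx2 : ∑ j, x j ^ 2 ≤ 1 := by
    have := eNorm_sq' x
    nlinarith [eNorm_nonneg' x]
  have key : ∀ i, (A.mulVec x i) ^ 2 ≤ ∑ j, A i j ^ 2 := by
    intro i
    have cs := Finset.sum_mul_sq_le_sq_mul_sq Finset.univ (fun j => A i j) x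
    have : (∑ j, A i j * x j) ^ 2 ≤ (∑ j, A i j ^ 2) * 1 :=
      cs.trans (by
        have h0 : (0:ℝ) ≤ ∑ j, A i j ^ 2 := by positivity
        nlinarith)
    simpa [Matrix.mulVec, dotProduct] using this.trans_eq (mul_one _)
  have hle : eNorm (A.mulVec x) ^ 2 ≤ frobNorm A ^ 2 := by
    rw [eNorm_sq']
    have h2 : frobNorm A ^ 2 = ∑ i, ∑ j, A i j ^ 2 := Real.sq_sqrt (by positivity)
    rw [h2]
    exact Finset.sum_le_sum fun i _ => key i
  calc eNorm (A.mulVec x) = Real.sqrt (eNorm (A.mulVec x) ^ 2) :=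
        (Real.sqrt_sq (eNorm_nonneg' _)).symm
    _ ≤ Real.sqrt (frobNorm A ^ 2) := Real.sqrt_le_sqrt hle
    _ = frobNorm A := Real.sqrt_sq (by unfold frobNorm; positivity)

lemma specNorm_nonneg' {m n : Type*} [Fintype m] [Fintype n] (A : Matrix m n ℝ) :
    0 ≤ specNorm A := by
  have h : (0:ℝ) ∈ {c | ∃ x : n → ℝ, eNorm x ≤ 1 ∧ c = eNorm (A.mulVec x)} := by
    refine ⟨0, ?_, ?_⟩
    · simp [eNorm]
    · simp [eNorm, Matrix.mulVec_zero]
  exact le_csSup (specSet_bddAbove A) h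

lemma eNorm_mulVec_le {m n : Type*} [Fintype m] [Fintype n] (A : Matrix m n ℝ) (x : n → ℝ) :
    eNorm (A.mulVec x) ≤ specNorm A * eNorm x := by
  by_cases h : eNorm x = 0
  · rw [eNorm_eq_zero' h, Matrix.mulVec_zero]
    simp [eNorm]
  · have ht : 0 < eNorm x := lt_of_le_of_ne (eNorm_nonneg' x) (Ne.symm h)
    set t := eNorm x with htdef
    have hu : eNorm (t⁻¹ • x) = 1 := by
      rw [eNorm_smul', abs_of_pos (inv_pos.mpr ht)]
      field_simp
      exact htdef.symm
    have hmem : eNorm (A.mulVec (t⁻¹ • x)) ∈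
        {c | ∃ y : n → ℝ, eNorm y ≤ 1 ∧ c = eNorm (A.mulVec y)} :=
      ⟨t⁻¹ • x, le_of_eq hu, rfl⟩
    have hle : eNorm (A.mulVec (t⁻¹ • x)) ≤ specNorm A := le_csSup (specSet_bddAbove A) hmem
    have hAsm : A.mulVec (t⁻¹ • x) = t⁻¹ • A.mulVec x := by
      rw [Matrix.mulVec_smul]
    rw [hAsm, eNorm_smul', abs_of_pos (inv_pos.mpr ht)] at hle
    calc eNorm (A.mulVec x) = t * (t⁻¹ * eNorm (A.mulVec x)) := by field_simp
      _ ≤ t * specNorm A := mul_le_mul_of_nonneg_left hle (le_of_lt ht)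
      _ = specNorm A * t := mul_comm _ _

lemma eig_repr {a b : Type*} [Fintype a] [Fintype b] [DecidableEq b] (A : Matrix a b ℝ) (i : b) :
    ∃ v : b → ℝ, eNorm v = 1 ∧
      (Matrix.isHermitian_conjTranspose_mul_self A).eigenvalues i = eNorm (A.mulVec v) ^ 2 := by
  set hA := Matrix.isHermitian_conjTranspose_mul_self A with hAdef
  refine ⟨⇑(hA.eigenvectorBasis i), ?_, ?_⟩
  · have hnorm : ‖hA.eigenvectorBasis i‖ = 1 := hA.eigenvectorBasis.orthonormal.1 i
    rw [EuclideanSpace.norm_eq] at hnorm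
    simpa [eNorm, Real.norm_eq_abs, sq_abs] using hnorm
  · set v : b → ℝ := ⇑(hA.eigenvectorBasis i) with hv
    have hnorm : ‖hA.eigenvectorBasis i‖ = 1 := hA.eigenvectorBasis.orthonormal.1 i
    have hv1 : eNorm v = 1 := by
      rw [EuclideanSpace.norm_eq] at hnorm
      simpa [eNorm, Real.norm_eq_abs, sq_abs, hv] using hnorm
    have hvv : v ⬝ᵥ v = 1 := by
      have h1 : v ⬝ᵥ v = ∑ j, v j ^ 2 := by simp [dotProduct, sq]
      rw [h1, ← eNorm_sq', hv1]; norm_num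
    have heig := hA.mulVec_eigenvectorBasis i
    have key : v ⬝ᵥ ((Aᴴ * A).mulVec v) = hA.eigenvalues i := by
      rw [hv, heig]
      have hvv' := hvv
      rw [hv] at hvv'
      rw [dotProduct_smul, smul_eq_mul, hvv', mul_one]
    have key2 : v ⬝ᵥ ((Aᴴ * A).mulVec v) = (A.mulVec v) ⬝ᵥ (A.mulVec v) := by
      rw [Matrix.conjTranspose_eq_transpose_of_trivial, ← Matrix.mulVec_mulVec,
        Matrix.dotProduct_mulVec, Matrix.vecMul_transpose]
    rw [← key, key2, eNorm_sq']
    simp [dotProduct, sq]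

lemma sum_eig_eq_trace {b : Type*} [Fintype b] [DecidableEq b] (B : Matrix b b ℝ)
    (hB : B.IsHermitian) : ∑ i, hB.eigenvalues i = B.trace := by
  rw [hB.trace_eq_sum_eigenvalues]
  simp

lemma frobNorm_sq_eq_sum_eig {a b : Type*} [Fintype a] [Fintype b] [DecidableEq b]
    (A : Matrix a b ℝ) :
    frobNorm A ^ 2 = ∑ i, (Matrix.isHermitian_conjTranspose_mul_self A).eigenvalues i := by
  rw [sum_eig_eq_trace _ (Matrix.isHermitian_conjTranspose_mul_self A)]
  have h1 : frobNorm A ^ 2 = ∑ i, ∑ j, A i j ^ 2 := Real.sq_sqrt (by positivity)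
  rw [h1, Matrix.conjTranspose_eq_transpose_of_trivial]
  simp only [Matrix.trace, Matrix.diag, Matrix.mul_apply, Matrix.transpose_apply]
  rw [Finset.sum_comm]
  simp [sq]

lemma eig_nonneg {a b : Type*} [Fintype a] [Fintype b] [DecidableEq b] (A : Matrix a b ℝ)
    (i : b) : 0 ≤ (Matrix.isHermitian_conjTranspose_mul_self A).eigenvalues i := by
  obtain ⟨v, -, h⟩ := eig_repr A i
  rw [h]; positivity

lemma eig_le {a b : Type*} [Fintype a] [Fintype b] [DecidableEq b] (A : Matrix a b ℝ) {K : ℝ}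
    (hK : 0 ≤ K) (h : ∀ x, eNorm (A.mulVec x) ≤ K * eNorm x) (i : b) :
    (Matrix.isHermitian_conjTranspose_mul_self A).eigenvalues i ≤ K ^ 2 := by
  obtain ⟨v, hv1, hrep⟩ := eig_repr A i
  have h2 := h v
  rw [hv1, mul_one] at h2
  rw [hrep]
  exact pow_le_pow_left₀ (eNorm_nonneg' _) h2 2

lemma frobNorm_nonneg' {a b : Type*} [Fintype a] [Fintype b] (A : Matrix a b ℝ) :
    0 ≤ frobNorm A := Real.sqrt_nonneg _

lemma nucNorm_nonneg' {a b : Type*} [Fintype a] [Fintype b] [DecidableEq b] (A : Matrix a b ℝ) :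
    0 ≤ nucNorm A := Finset.sum_nonneg fun i _ => Real.sqrt_nonneg _

lemma frob_sq_le_spec_mul_nuc {a b : Type*} [Fintype a] [Fintype b] [DecidableEq b]
    (A : Matrix a b ℝ) {K : ℝ} (hK : 0 ≤ K) (h : ∀ x, eNorm (A.mulVec x) ≤ K * eNorm x) :
    frobNorm A ^ 2 ≤ K * nucNorm A := by
  rw [frobNorm_sq_eq_sum_eig, nucNorm, Finset.mul_sum]
  refine Finset.sum_le_sum fun i _ => ?_
  set lam := (Matrix.isHermitian_conjTranspose_mul_self A).eigenvalues i
  have h0 : 0 ≤ lam := eig_nonneg A i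
  have h1 : lam ≤ K ^ 2 := eig_le A hK h i
  have hs : Real.sqrt lam ≤ K := by
    calc Real.sqrt lam ≤ Real.sqrt (K ^ 2) := Real.sqrt_le_sqrt h1
      _ = K := Real.sqrt_sq hK
  calc lam = Real.sqrt lam * Real.sqrt lam := (Real.mul_self_sqrt h0).symm
    _ ≤ K * Real.sqrt lam := mul_le_mul_of_nonneg_right hs (Real.sqrt_nonneg _)

lemma card_support_eq_rank {a b : Type*} [Fintype a] [Fintype b] [DecidableEq a] [DecidableEq b]
    (A : Matrix a b ℝ) :
    (Finset.univ.filter fun i =>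
      (Matrix.isHermitian_conjTranspose_mul_self A).eigenvalues i ≠ 0).card = A.rank := by
  have h1 := (Matrix.isHermitian_conjTranspose_mul_self A).rank_eq_card_non_zero_eigs
  rw [Fintype.card_subtype] at h1
  rw [← h1, Matrix.conjTranspose_eq_transpose_of_trivial, Matrix.rank_transpose_mul_self]

lemma nuc_le_sqrt_rank_mul_frob {a b : Type*} [Fintype a] [Fintype b] [DecidableEq a]
    [DecidableEq b] (A : Matrix a b ℝ) {r : ℕ} (hr : A.rank ≤ r) :
    nucNorm A ≤ Real.sqrt r * frobNorm A := by
  set lam := (Matrix.isHermitian_conjTranspose_mul_self A).eigenvalues with hlam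
  set T := Finset.univ.filter fun i => lam i ≠ 0 with hT
  have hTcard : (T.card : ℝ) ≤ (r : ℝ) := by
    have h2 := card_support_eq_rank A
    rw [← hlam] at h2
    exact_mod_cast h2 ▸ (Nat.cast_le.mpr hr)
  have hsum : nucNorm A = ∑ i ∈ T, Real.sqrt (lam i) := by
    rw [nucNorm, ← hlam]
    refine (Finset.sum_subset (Finset.subset_univ T) fun i _ hi => ?_).symm
    rw [hT, Finset.mem_filter] at hi
    push_neg at hi
    rw [hi (Finset.mem_univ i), Real.sqrt_zero]
  have hcs : (∑ i ∈ T, Real.sqrt (lam i)) ^ 2 ≤ (T.card : ℝ) * ∑ i ∈ T, lam i := by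
    have h := sq_sum_le_card_mul_sum_sq (s := T) (f := fun i => Real.sqrt (lam i))
    refine h.trans_eq ?_
    congr 1
    exact Finset.sum_congr rfl fun i _ => Real.sq_sqrt (eig_nonneg A i)
  have hsumT : ∑ i ∈ T, lam i ≤ frobNorm A ^ 2 := by
    rw [frobNorm_sq_eq_sum_eig, ← hlam]
    exact Finset.sum_le_sum_of_subset_of_nonneg (Finset.subset_univ T)
      fun i _ _ => eig_nonneg A i
  have hnn : 0 ≤ nucNorm A := nucNorm_nonneg' A
  have hsq : nucNorm A ^ 2 ≤ (r : ℝ) * frobNorm A ^ 2 := by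
    rw [hsum]
    refine hcs.trans ?_
    have h1 : (T.card : ℝ) * ∑ i ∈ T, lam i ≤ (r:ℝ) * ∑ i ∈ T, lam i :=
      mul_le_mul_of_nonneg_right hTcard (Finset.sum_nonneg fun i _ => eig_nonneg A i)
    exact h1.trans (mul_le_mul_of_nonneg_left hsumT (by positivity))
  calc nucNorm A = Real.sqrt (nucNorm A ^ 2) := (Real.sqrt_sq hnn).symm
    _ ≤ Real.sqrt ((r:ℝ) * frobNorm A ^ 2) := Real.sqrt_le_sqrt hsq
    _ = Real.sqrt r * frobNorm A := by
        rw [Real.sqrt_mul (Nat.cast_nonneg r), Real.sqrt_sq (frobNorm_nonneg' A)]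

lemma frob_sq_le_rank_mul_spec_sq {a b : Type*} [Fintype a] [Fintype b] [DecidableEq a]
    [DecidableEq b] (A : Matrix a b ℝ) {r : ℕ} (hr : A.rank ≤ r) {K : ℝ} (hK : 0 ≤ K)
    (h : ∀ x, eNorm (A.mulVec x) ≤ K * eNorm x) :
    frobNorm A ^ 2 ≤ (r : ℝ) * K ^ 2 := by
  set lam := (Matrix.isHermitian_conjTranspose_mul_self A).eigenvalues with hlam
  set T := Finset.univ.filter fun i => lam i ≠ 0 with hT
  have hTcard : (T.card : ℝ) ≤ (r : ℝ) := by
    have h2 := card_support_eq_rank A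
    rw [← hlam] at h2
    exact_mod_cast h2 ▸ (Nat.cast_le.mpr hr)
  have hsum : frobNorm A ^ 2 = ∑ i ∈ T, lam i := by
    rw [frobNorm_sq_eq_sum_eig, ← hlam]
    refine (Finset.sum_subset (Finset.subset_univ T) fun i _ hi => ?_).symm
    rw [hT, Finset.mem_filter] at hi
    push_neg at hi
    exact hi (Finset.mem_univ i)
  rw [hsum]
  calc ∑ i ∈ T, lam i ≤ ∑ _i ∈ T, K ^ 2 := Finset.sum_le_sum fun i _ => eig_le A hK h i
    _ = (T.card : ℝ) * K ^ 2 := by rw [Finset.sum_const, nsmul_eq_mul]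
    _ ≤ (r : ℝ) * K ^ 2 := mul_le_mul_of_nonneg_right hTcard (by positivity)

lemma dot_self_nonneg' {a : Type*} [Fintype a] (x : a → ℝ) : 0 ≤ x ⬝ᵥ x :=
  Finset.sum_nonneg fun i _ => mul_self_nonneg _

lemma eNorm_sq_dot {a : Type*} [Fintype a] (x : a → ℝ) : eNorm x ^ 2 = x ⬝ᵥ x := by
  rw [eNorm_sq']; simp [dotProduct, sq]

lemma sub_dot_expand {a : Type*} [Fintype a] (x p : a → ℝ) :
    (x - p) ⬝ᵥ (x - p) = x ⬝ᵥ x - 2 * (x ⬝ᵥ p) + p ⬝ᵥ p := by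
  simp only [dotProduct, Pi.sub_apply, Finset.mul_sum]
  rw [← Finset.sum_sub_distrib, ← Finset.sum_add_distrib]
  exact Finset.sum_congr rfl fun i _ => by ring

section contract
variable {a r : Type*} [Fintype a] [Fintype r] [DecidableEq a] [DecidableEq r]
variable (V : Matrix a r ℝ) (hV : Vᵀ * V = 1)

include hV in
lemma proj_dots (z : a → ℝ) :
    z ⬝ᵥ ((V * Vᵀ).mulVec z) = (Vᵀ.mulVec z) ⬝ᵥ (Vᵀ.mulVec z) ∧
    ((V * Vᵀ).mulVec z) ⬝ᵥ ((V * Vᵀ).mulVec z) = (Vᵀ.mulVec z) ⬝ᵥ (Vᵀ.mulVec z) := by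
  set w := Vᵀ.mulVec z with hw
  have hPz : (V * Vᵀ).mulVec z = V.mulVec w := by rw [hw, Matrix.mulVec_mulVec]
  constructor
  · rw [hPz, Matrix.dotProduct_mulVec, ← Matrix.mulVec_transpose]
  · rw [hPz, Matrix.dotProduct_mulVec]
    have h2 : (V.mulVec w) ᵥ* V = w := by
      rw [← Matrix.mulVec_transpose, Matrix.mulVec_mulVec, hV, Matrix.one_mulVec]
    rw [h2]

include hV in
lemma contract_P (z : a → ℝ) : eNorm ((V * Vᵀ).mulVec z) ≤ eNorm z := by
  obtain ⟨h1, h2⟩ := proj_dots V hV z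
  apply eNorm_le_of_sq_le
  rw [eNorm_sq_dot, eNorm_sq_dot, h2]
  have expand := sub_dot_expand z ((V * Vᵀ).mulVec z)
  rw [h1, h2] at expand
  have hnn := dot_self_nonneg' (z - (V * Vᵀ).mulVec z)
  linarith

include hV in
lemma contract_Q (z : a → ℝ) : eNorm ((1 - V * Vᵀ).mulVec z) ≤ eNorm z := by
  obtain ⟨h1, h2⟩ := proj_dots V hV z
  apply eNorm_le_of_sq_le
  have hq : (1 - V * Vᵀ).mulVec z = z - (V * Vᵀ).mulVec z := by
    rw [Matrix.sub_mulVec, Matrix.one_mulVec]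
  rw [eNorm_sq_dot, eNorm_sq_dot, hq]
  have expand := sub_dot_expand z ((V * Vᵀ).mulVec z)
  rw [h1, h2] at expand
  have hnn := dot_self_nonneg' (Vᵀ.mulVec z)
  linarith
end contract

lemma matrix_rank_add_le {a b : Type*} [Fintype a] [Fintype b] (A B : Matrix a b ℝ) :
    (A + B).rank ≤ A.rank + B.rank := by
  have h : LinearMap.range (A + B).mulVecLin ≤
      LinearMap.range A.mulVecLin ⊔ LinearMap.range B.mulVecLin := by
    rintro y ⟨x, rfl⟩
    have h2 : (A + B).mulVecLin x = A.mulVecLin x + B.mulVecLin x := by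
      simp [Matrix.mulVecLin_apply, Matrix.add_mulVec]
    rw [h2]
    exact Submodule.add_mem_sup (LinearMap.mem_range_self _ x) (LinearMap.mem_range_self _ x)
  exact le_trans (Submodule.finrank_mono h) (Submodule.finrank_add_le_finrank_add_finrank _ _)

lemma frobInner_eq_trace {a b : Type*} [Fintype a] [Fintype b] (A B : Matrix a b ℝ) :
    frobInner A B = (Aᵀ * B).trace := by
  simp only [frobInner, Matrix.trace, Matrix.diag, Matrix.mul_apply, Matrix.transpose_apply]
  exact Finset.sum_comm

lemma frobInner_sub_left {a b : Type*} [Fintype a] [Fintype b] (A B C : Matrix a b ℝ) :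
    frobInner (A - B) C = frobInner A C - frobInner B C := by
  simp only [frobInner, Matrix.sub_apply, sub_mul, Finset.sum_sub_distrib]

lemma frob_add_sq {a b : Type*} [Fintype a] [Fintype b] (A B : Matrix a b ℝ) :
    frobNorm (A + B) ^ 2 = frobNorm A ^ 2 + 2 * frobInner A B + frobNorm B ^ 2 := by
  have h : ∀ (X : Matrix a b ℝ), frobNorm X ^ 2 = ∑ i, ∑ j, X i j ^ 2 := fun X =>
    Real.sq_sqrt (by positivity)
  rw [h, h, h, frobInner, Finset.mul_sum]
  rw [← Finset.sum_add_distrib, ← Finset.sum_add_distrib]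
  refine Finset.sum_congr rfl fun i _ => ?_
  rw [Finset.mul_sum, ← Finset.sum_add_distrib, ← Finset.sum_add_distrib]
  refine Finset.sum_congr rfl fun j _ => ?_
  simp [Matrix.add_apply]; ring

section mainaux
variable {n m R : ℕ} (Δ : Matrix (Fin n) (Fin m) ℝ)
    (V₁ : Matrix (Fin n) (Fin R) ℝ) (V₂ : Matrix (Fin m) (Fin R) ℝ)
    (hV₁ : V₁ᵀ * V₁ = 1) (hV₂ : V₂ᵀ * V₂ = 1)

include hV₁ hV₂ in
lemma frobInner_MC_zero :
    frobInner (Δ - (1 - V₁ * V₁ᵀ) * Δ * (1 - V₂ * V₂ᵀ))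
      ((1 - V₁ * V₁ᵀ) * Δ * (1 - V₂ * V₂ᵀ)) = 0 := by
  set Q₁ := 1 - V₁ * V₁ᵀ with hQ₁
  set Q₂ := 1 - V₂ * V₂ᵀ with hQ₂
  have hsym₁ : Q₁ᵀ = Q₁ := by
    rw [hQ₁, Matrix.transpose_sub, Matrix.transpose_one, Matrix.transpose_mul,
      Matrix.transpose_transpose]
  have hsym₂ : Q₂ᵀ = Q₂ := by
    rw [hQ₂, Matrix.transpose_sub, Matrix.transpose_one, Matrix.transpose_mul,
      Matrix.transpose_transpose]
  have hP₁ : (V₁ * V₁ᵀ) * (V₁ * V₁ᵀ) = V₁ * V₁ᵀ := by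
    rw [Matrix.mul_assoc, ← Matrix.mul_assoc V₁ᵀ, hV₁, Matrix.one_mul]
  have hP₂ : (V₂ * V₂ᵀ) * (V₂ * V₂ᵀ) = V₂ * V₂ᵀ := by
    rw [Matrix.mul_assoc, ← Matrix.mul_assoc V₂ᵀ, hV₂, Matrix.one_mul]
  have hidem₁ : Q₁ * Q₁ = Q₁ := by
    rw [hQ₁]
    simp only [Matrix.sub_mul, Matrix.mul_sub, Matrix.one_mul, Matrix.mul_one, hP₁]
    abel
  have hidem₂ : Q₂ * Q₂ = Q₂ := by
    rw [hQ₂]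
    simp only [Matrix.sub_mul, Matrix.mul_sub, Matrix.one_mul, Matrix.mul_one, hP₂]
    abel
  rw [frobInner_sub_left, sub_eq_zero, frobInner_eq_trace, frobInner_eq_trace]
  have hT : (Q₁ * Δ * Q₂)ᵀ = Q₂ * (Δᵀ * Q₁) := by
    rw [Matrix.transpose_mul, Matrix.transpose_mul, hsym₁, hsym₂]
  rw [hT]
  have e1 : Q₂ * (Δᵀ * Q₁) * (Q₁ * Δ * Q₂) = Q₂ * (Δᵀ * (Q₁ * (Δ * Q₂))) := by
    calc Q₂ * (Δᵀ * Q₁) * (Q₁ * Δ * Q₂)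
        = Q₂ * ((Δᵀ * Q₁) * (Q₁ * (Δ * Q₂))) := by
          rw [Matrix.mul_assoc (Q₂) (Δᵀ * Q₁), Matrix.mul_assoc Q₁ Δ Q₂]
      _ = Q₂ * (Δᵀ * ((Q₁ * Q₁) * (Δ * Q₂))) := by
          rw [Matrix.mul_assoc Δᵀ Q₁, ← Matrix.mul_assoc Q₁ Q₁]
      _ = Q₂ * (Δᵀ * (Q₁ * (Δ * Q₂))) := by rw [hidem₁]
  rw [e1, Matrix.trace_mul_comm Q₂]
  have e2 : Δᵀ * (Q₁ * (Δ * Q₂)) * Q₂ = Δᵀ * (Q₁ * Δ * Q₂) := by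
    calc Δᵀ * (Q₁ * (Δ * Q₂)) * Q₂ = Δᵀ * (Q₁ * (Δ * (Q₂ * Q₂))) := by
          rw [Matrix.mul_assoc Δᵀ, Matrix.mul_assoc Q₁, Matrix.mul_assoc Δ]
      _ = Δᵀ * (Q₁ * (Δ * Q₂)) := by rw [hidem₂]
      _ = Δᵀ * (Q₁ * Δ * Q₂) := by rw [Matrix.mul_assoc Q₁]
  rw [e2]
end mainaux

/-- If `‖P_W(Δ)‖_* ≤ 3‖P_V(Δ)‖_*` then `‖Δ‖_F ≤ 5√R · ‖Δ‖`. -/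
theorem stmt11 (n m R : ℕ) (Δ : Matrix (Fin n) (Fin m) ℝ)
    (V₁ : Matrix (Fin n) (Fin R) ℝ) (V₂ : Matrix (Fin m) (Fin R) ℝ)
    (hV₁ : V₁ᵀ * V₁ = 1) (hV₂ : V₂ᵀ * V₂ = 1)
    (hcone : nucNorm (Δ - (V₁ * V₁ᵀ * Δ + Δ * (V₂ * V₂ᵀ) - V₁ * V₁ᵀ * Δ * (V₂ * V₂ᵀ))) ≤
      3 * nucNorm (V₁ * V₁ᵀ * Δ + Δ * (V₂ * V₂ᵀ) - V₁ * V₁ᵀ * Δ * (V₂ * V₂ᵀ))) :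
    frobNorm Δ ≤ 5 * Real.sqrt R * specNorm Δ := by
  obtain ⟨Mm, hMm⟩ : ∃ M, V₁ * V₁ᵀ * Δ + Δ * (V₂ * V₂ᵀ) - V₁ * V₁ᵀ * Δ * (V₂ * V₂ᵀ) = M :=
    ⟨_, rfl⟩
  rw [hMm] at hcone
  obtain ⟨Cm, hCm⟩ : ∃ Cq, (1 - V₁ * V₁ᵀ) * Δ * (1 - V₂ * V₂ᵀ) = Cq := ⟨_, rfl⟩
  obtain ⟨s, hsdef⟩ : ∃ s, specNorm Δ = s := ⟨_, rfl⟩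
  rw [hsdef]
  have hs : 0 ≤ s := hsdef ▸ specNorm_nonneg' Δ
  have hmv : ∀ y, eNorm (Δ.mulVec y) ≤ s * eNorm y := by
    intro y; rw [← hsdef]; exact eNorm_mulVec_le Δ y
  have hdiff : Δ - Mm = Cm := by
    rw [← hMm, ← hCm]
    simp only [Matrix.sub_mul, Matrix.mul_sub, Matrix.one_mul, Matrix.mul_one, Matrix.mul_assoc]
    abel
  rw [hdiff] at hcone
  have hΔ : Δ = Mm + Cm := by rw [← hdiff]; abel
  have hMm' : Mm = Δ - Cm := by rw [← hdiff]; abel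
  have hinner : frobInner Mm Cm = 0 := by
    rw [hMm', ← hCm]
    exact frobInner_MC_zero Δ V₁ V₂ hV₁ hV₂
  have hCvec : ∀ x, eNorm (Cm.mulVec x) ≤ s * eNorm x := by
    intro x
    have h1 : Cm.mulVec x =
        (1 - V₁ * V₁ᵀ).mulVec (Δ.mulVec ((1 - V₂ * V₂ᵀ).mulVec x)) := by
      rw [← hCm]
      simp only [← Matrix.mulVec_mulVec]
    rw [h1]
    have s1 : eNorm ((1 - V₁ * V₁ᵀ).mulVec (Δ.mulVec ((1 - V₂ * V₂ᵀ).mulVec x)))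
        ≤ eNorm (Δ.mulVec ((1 - V₂ * V₂ᵀ).mulVec x)) := contract_Q V₁ hV₁ _
    have s2 : eNorm (Δ.mulVec ((1 - V₂ * V₂ᵀ).mulVec x))
        ≤ s * eNorm ((1 - V₂ * V₂ᵀ).mulVec x) := hmv _
    have s3 : s * eNorm ((1 - V₂ * V₂ᵀ).mulVec x) ≤ s * eNorm x :=
      mul_le_mul_of_nonneg_left (contract_Q V₂ hV₂ x) hs
    exact le_trans s1 (le_trans s2 s3)
  have hMsplit : Mm = V₁ * V₁ᵀ * Δ + (1 - V₁ * V₁ᵀ) * (Δ * (V₂ * V₂ᵀ)) := by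
    rw [← hMm]
    simp only [Matrix.sub_mul, Matrix.mul_sub, Matrix.one_mul, Matrix.mul_one, Matrix.mul_assoc]
    abel
  have hMvec : ∀ x, eNorm (Mm.mulVec x) ≤ (2 * s) * eNorm x := by
    intro x
    have h1 : Mm.mulVec x = (V₁ * V₁ᵀ).mulVec (Δ.mulVec x)
        + (1 - V₁ * V₁ᵀ).mulVec (Δ.mulVec ((V₂ * V₂ᵀ).mulVec x)) := by
      rw [hMsplit]
      simp only [Matrix.add_mulVec, Matrix.mulVec_mulVec]
    rw [h1]
    have t1 : eNorm ((V₁ * V₁ᵀ).mulVec (Δ.mulVec x)) ≤ s * eNorm x :=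
      le_trans (contract_P V₁ hV₁ _) (hmv x)
    have t2 : eNorm ((1 - V₁ * V₁ᵀ).mulVec (Δ.mulVec ((V₂ * V₂ᵀ).mulVec x))) ≤ s * eNorm x := by
      have s1 : eNorm ((1 - V₁ * V₁ᵀ).mulVec (Δ.mulVec ((V₂ * V₂ᵀ).mulVec x)))
          ≤ eNorm (Δ.mulVec ((V₂ * V₂ᵀ).mulVec x)) := contract_Q V₁ hV₁ _
      have s2 : eNorm (Δ.mulVec ((V₂ * V₂ᵀ).mulVec x))
          ≤ s * eNorm ((V₂ * V₂ᵀ).mulVec x) := hmv _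
      have s3 : s * eNorm ((V₂ * V₂ᵀ).mulVec x) ≤ s * eNorm x :=
        mul_le_mul_of_nonneg_left (contract_P V₂ hV₂ x) hs
      exact le_trans s1 (le_trans s2 s3)
    have s4 : eNorm ((V₁ * V₁ᵀ).mulVec (Δ.mulVec x)
          + (1 - V₁ * V₁ᵀ).mulVec (Δ.mulVec ((V₂ * V₂ᵀ).mulVec x)))
        ≤ eNorm ((V₁ * V₁ᵀ).mulVec (Δ.mulVec x))
          + eNorm ((1 - V₁ * V₁ᵀ).mulVec (Δ.mulVec ((V₂ * V₂ᵀ).mulVec x))) := eNorm_add_le _ _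
    have s5 : eNorm ((V₁ * V₁ᵀ).mulVec (Δ.mulVec x))
          + eNorm ((1 - V₁ * V₁ᵀ).mulVec (Δ.mulVec ((V₂ * V₂ᵀ).mulVec x)))
        ≤ s * eNorm x + s * eNorm x := add_le_add t1 t2
    refine le_trans s4 (le_trans s5 ?_)
    rw [two_mul, add_mul]
  have hrank : Mm.rank ≤ 2 * R := by
    have hMsplit2 : Mm = V₁ * (V₁ᵀ * Δ) + ((1 - V₁ * V₁ᵀ) * (Δ * V₂)) * V₂ᵀ := by
      rw [← hMm]
      simp only [Matrix.sub_mul, Matrix.mul_sub, Matrix.one_mul, Matrix.mul_one, Matrix.mul_assoc]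
      abel
    rw [hMsplit2]
    refine le_trans (matrix_rank_add_le _ _) ?_
    have r1 : (V₁ * (V₁ᵀ * Δ)).rank ≤ R :=
      le_trans (Matrix.rank_mul_le_left _ _)
        (le_trans V₁.rank_le_card_width (le_of_eq (Fintype.card_fin R)))
    have r2 : (((1 - V₁ * V₁ᵀ) * (Δ * V₂)) * V₂ᵀ).rank ≤ R :=
      le_trans (Matrix.rank_mul_le_right _ _)
        (le_trans V₂ᵀ.rank_le_card_height (le_of_eq (Fintype.card_fin R)))
    omega
  have h1 : frobNorm Mm ^ 2 ≤ ((2 * R : ℕ) : ℝ) * (2 * s) ^ 2 :=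
    frob_sq_le_rank_mul_spec_sq Mm hrank (by positivity) hMvec
  have h2 : nucNorm Mm ≤ Real.sqrt ((2 * R : ℕ) : ℝ) * frobNorm Mm :=
    nuc_le_sqrt_rank_mul_frob Mm hrank
  have h3 : frobNorm Cm ^ 2 ≤ s * nucNorm Cm := frob_sq_le_spec_mul_nuc Cm hs hCvec
  have hpyth : frobNorm Δ ^ 2 = frobNorm Mm ^ 2 + 2 * frobInner Mm Cm + frobNorm Cm ^ 2 := by
    conv_lhs => rw [hΔ]
    rw [frob_add_sq]
  obtain ⟨t, htdef⟩ : ∃ t, Real.sqrt ((2 * R : ℕ) : ℝ) = t := ⟨_, rfl⟩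
  rw [htdef] at h2
  have ht : 0 ≤ t := htdef ▸ Real.sqrt_nonneg _
  have ht2 : t ^ 2 = 2 * (R : ℝ) := by
    rw [← htdef, Real.sq_sqrt (by positivity)]
    push_cast; ring
  have hcast : ((2 * R : ℕ) : ℝ) = 2 * (R : ℝ) := by push_cast; ring
  have hu : 0 ≤ frobNorm Mm := frobNorm_nonneg' Mm
  have hc : 0 ≤ frobNorm Cm := frobNorm_nonneg' Cm
  have hνM : 0 ≤ nucNorm Mm := nucNorm_nonneg' Mm
  have hu2 : frobNorm Mm ^ 2 ≤ t ^ 2 * (4 * s ^ 2) := by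
    rw [ht2]; rw [hcast] at h1; nlinarith [h1]
  have hule : frobNorm Mm ≤ 2 * t * s := by
    have h4 : frobNorm Mm ^ 2 ≤ (2 * t * s) ^ 2 := by
      have he : (2 * t * s) ^ 2 = t ^ 2 * (4 * s ^ 2) := by ring
      rw [he]; exact hu2
    exact le_of_pow_le_pow_left₀ two_ne_zero (by positivity) h4
  have hc2 : frobNorm Cm ^ 2 ≤ 3 * s * t * (2 * t * s) := by
    calc frobNorm Cm ^ 2 ≤ s * nucNorm Cm := h3
      _ ≤ s * (3 * nucNorm Mm) := mul_le_mul_of_nonneg_left hcone hs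
      _ ≤ s * (3 * (t * frobNorm Mm)) := by
          refine mul_le_mul_of_nonneg_left ?_ hs
          exact mul_le_mul_of_nonneg_left h2 (by norm_num)
      _ ≤ s * (3 * (t * (2 * t * s))) := by
          refine mul_le_mul_of_nonneg_left ?_ hs
          refine mul_le_mul_of_nonneg_left ?_ (by norm_num)
          exact mul_le_mul_of_nonneg_left hule ht
      _ = 3 * s * t * (2 * t * s) := by ring
  have hfin : frobNorm Δ ^ 2 ≤ 25 * (R : ℝ) * s ^ 2 := by
    have hR : (0:ℝ) ≤ (R : ℝ) := Nat.cast_nonneg R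
    have hR0 : (0:ℝ) ≤ (R : ℝ) * s ^ 2 := mul_nonneg hR (sq_nonneg s)
    have e1 : frobNorm Mm ^ 2 ≤ 8 * ((R : ℝ) * s ^ 2) := by
      have he : t ^ 2 * (4 * s ^ 2) = 8 * ((R : ℝ) * s ^ 2) := by rw [ht2]; ring
      rw [← he]; exact hu2
    have e2 : frobNorm Cm ^ 2 ≤ 12 * ((R : ℝ) * s ^ 2) := by
      have he : 3 * s * t * (2 * t * s) = 6 * (t ^ 2) * s ^ 2 := by ring
      rw [he, ht2] at hc2
      calc frobNorm Cm ^ 2 ≤ 6 * (2 * (R:ℝ)) * s ^ 2 := hc2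
        _ = 12 * ((R : ℝ) * s ^ 2) := by ring
    rw [hpyth, hinner]
    have hgoal : frobNorm Mm ^ 2 + 2 * 0 + frobNorm Cm ^ 2 ≤ 25 * (R : ℝ) * s ^ 2 := by
      have : (25:ℝ) * (R : ℝ) * s ^ 2 = 25 * ((R:ℝ) * s ^ 2) := by ring
      rw [this]
      linarith [e1, e2, hR0]
    exact hgoal
  have hrhs : 0 ≤ 5 * Real.sqrt R * s := by positivity
  have hsqr : (5 * Real.sqrt R * s) ^ 2 = 25 * (R : ℝ) * s ^ 2 := by
    rw [mul_pow, mul_pow, Real.sq_sqrt (Nat.cast_nonneg R)]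
    ring
  refine le_of_pow_le_pow_left₀ two_ne_zero hrhs ?_
  rw [hsqr]
  exact hfin

end
end

section
/- For every n ≥ 1 and every v ∈ ℂ^{2n−1}, the spectral norm of the n×n Hankel matrix H(v) is bounded by the largest modulus of the discrete Fourier transform of v: ‖H(v)‖ ≤ max_{0 ≤ k ≤ 2n−2} | Σ_{j=0}^{2n−2} v_{j+1} e^{−2πi·jk/(2n−1)} |. -/
open MeasureTheory ProbabilityTheory Matrix

noncomputable section

def eNormC {ι : Type*} [Fintype ι] (x : ι → ℂ) : ℝ := Real.sqrt (∑ i, ‖x i‖ ^ 2)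

def specNormC {m n : Type*} [Fintype m] [Fintype n] (A : Matrix m n ℂ) : ℝ :=
  sSup {c | ∃ x : n → ℂ, eNormC x ≤ 1 ∧ c = eNormC (A.mulVec x)}

def hankelC {n : ℕ} (v : Fin (2*n-1) → ℂ) : Matrix (Fin n) (Fin n) ℂ :=
  Matrix.of fun j k => v ⟨(j:ℕ) + k, by omega⟩

section HankelAux
open Complex Finset

lemma orth (N : ℕ) (hN : 0 < N) (c : ℤ) :
    ∑ t : Fin N, Complex.exp (2 * Real.pi * Complex.I * c * t / N) =
      if (N:ℤ) ∣ c then (N:ℂ) else 0 := by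
  have hNC : (N:ℂ) ≠ 0 := Nat.cast_ne_zero.mpr hN.ne'
  set r : ℂ := Complex.exp (2 * Real.pi * Complex.I * c / N) with hr
  have key : ∀ t : ℕ, Complex.exp (2 * Real.pi * Complex.I * c * t / N) = r ^ t := by
    intro t
    rw [hr, ← Complex.exp_nat_mul]; ring_nf
  rw [Fin.sum_univ_eq_sum_range (fun t => Complex.exp (2 * Real.pi * Complex.I * c * (t:ℕ) / N))]
  simp only [key]
  have hr1 : r = 1 ↔ (N:ℤ) ∣ c := by
    rw [hr, Complex.exp_eq_one_iff]
    constructor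
    · rintro ⟨k, hk⟩
      refine ⟨k, ?_⟩
      have h2 : (2:ℂ) * Real.pi * Complex.I ≠ 0 := by
        simp [Real.pi_ne_zero, Complex.I_ne_zero]
      have : (c : ℂ) = (k : ℂ) * N := by
        field_simp at hk
        have := hk
        -- hk : 2 * π * I * c = k * (2 * π * I) * N  (roughly)
        have h3 : (2 * Real.pi * Complex.I) * (c:ℂ) = (2 * Real.pi * Complex.I) * ((k:ℂ) * N) := by
          linear_combination (2 * Real.pi * Complex.I) * hk
        exact mul_left_cancel₀ h2 h3
      have : c = k * N := by exact_mod_cast this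
      rw [this, mul_comm]
    · rintro ⟨k, rfl⟩
      refine ⟨k, ?_⟩
      push_cast
      field_simp
  by_cases hdvd : (N:ℤ) ∣ c
  · simp only [hdvd, if_true]
    rw [hr1.mpr hdvd]
    simp
  · simp only [hdvd, if_false]
    have hrne : r ≠ 1 := fun h => hdvd (hr1.mp h)
    rw [geom_sum_eq hrne]
    have hrN : r ^ N = 1 := by
      rw [hr, ← Complex.exp_nat_mul, Complex.exp_eq_one_iff]
      refine ⟨c, ?_⟩
      field_simp
    simp [hrN]

lemma findvd (N : ℕ) (hN : 0 < N) (l l' : Fin N) :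
    (N:ℤ) ∣ ((l:ℤ) - (l':ℤ)) ↔ l' = l := by
  constructor
  · intro ⟨d, hd⟩
    have hNZ : (0:ℤ) < N := by exact_mod_cast hN
    have hl : ((l:ℕ):ℤ) < N := by exact_mod_cast l.isLt
    have hl' : ((l':ℕ):ℤ) < N := by exact_mod_cast l'.isLt
    have hl0 : (0:ℤ) ≤ ((l:ℕ):ℤ) := by positivity
    have hl0' : (0:ℤ) ≤ ((l':ℕ):ℤ) := by positivity
    have h1 : (N:ℤ) * d < N * 1 := by rw [mul_one]; linarith
    have h2 : (N:ℤ) * (-1) < N * d := by linarith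
    have hd1 : d < 1 := (mul_lt_mul_iff_right₀ hNZ).mp h1
    have hd2 : -1 < d := (mul_lt_mul_iff_right₀ hNZ).mp h2
    have : d = 0 := by omega
    subst this
    simp only [mul_zero] at hd
    refine (Fin.ext ?_).symm
    omega
  · rintro rfl; simp

lemma inv_dft (N : ℕ) (hN : 0 < N) (v : Fin N → ℂ) (a : Fin N) :
    (1/(N:ℂ)) * ∑ t : Fin N, (∑ b : Fin N, v b *
        Complex.exp (-(2 * Real.pi * Complex.I * b * t) / N)) *
        Complex.exp (2 * Real.pi * Complex.I * a * t / N) = v a := by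
  have hNC : (N:ℂ) ≠ 0 := Nat.cast_ne_zero.mpr hN.ne'
  have main : ∑ t : Fin N, (∑ b : Fin N, v b *
      Complex.exp (-(2 * Real.pi * Complex.I * b * t) / N)) *
      Complex.exp (2 * Real.pi * Complex.I * a * t / N) = (N:ℂ) * v a := by
    calc ∑ t : Fin N, (∑ b : Fin N, v b *
          Complex.exp (-(2 * Real.pi * Complex.I * b * t) / N)) *
          Complex.exp (2 * Real.pi * Complex.I * a * t / N)
        = ∑ t : Fin N, ∑ b : Fin N, v b *
            Complex.exp (2 * Real.pi * Complex.I * (Int.cast ((a:ℤ) - (b:ℤ)) : ℂ) * t / N) := by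
          refine Finset.sum_congr rfl fun t _ => ?_
          rw [Finset.sum_mul]
          refine Finset.sum_congr rfl fun b _ => ?_
          rw [mul_assoc, ← Complex.exp_add]
          congr 2
          push_cast
          ring
      _ = ∑ b : Fin N, v b * (if (N:ℤ) ∣ ((a:ℤ) - (b:ℤ)) then (N:ℂ) else 0) := by
          rw [Finset.sum_comm]
          refine Finset.sum_congr rfl fun b _ => ?_
          rw [← Finset.mul_sum, orth N hN]
      _ = ∑ b : Fin N, (if b = a then v b * N else 0) := by
          refine Finset.sum_congr rfl fun b _ => ?_
          by_cases h : b = a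
          · rw [if_pos ((findvd N hN a b).mpr h), if_pos h]
          · rw [if_neg (fun hd => h ((findvd N hN a b).mp hd)), if_neg h, mul_zero]
      _ = (N:ℂ) * v a := by
          rw [Finset.sum_ite_eq' univ a]
          simp [mul_comm]
  rw [main]
  field_simp

lemma planch (N : ℕ) (hN : 0 < N) (y : Fin N → ℂ) :
    ∑ k : Fin N, (Complex.normSq (∑ l : Fin N, y l *
        Complex.exp (2 * Real.pi * Complex.I * l * k / N)) : ℝ) =
      N * ∑ l : Fin N, Complex.normSq (y l) := by
  have main : ∑ k : Fin N, ((∑ l : Fin N, y l * Complex.exp (2 * Real.pi * Complex.I * l * k / N)) *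
      (starRingEnd ℂ) (∑ l : Fin N, y l * Complex.exp (2 * Real.pi * Complex.I * l * k / N))) =
      (N : ℂ) * ∑ l : Fin N, (y l * (starRingEnd ℂ) (y l)) := by
    have conj_exp : ∀ (l k : Fin N), (starRingEnd ℂ) (Complex.exp (2 * Real.pi * Complex.I * l * k / N)) =
        Complex.exp (-(2 * Real.pi * Complex.I * l * k / N)) := by
      intro l k
      rw [← Complex.exp_conj]
      congr 1
      simp [map_div₀, Complex.conj_I, map_ofNat]
      ring
    calc ∑ k : Fin N, ((∑ l : Fin N, y l * Complex.exp (2 * Real.pi * Complex.I * l * k / N)) *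
        (starRingEnd ℂ) (∑ l : Fin N, y l * Complex.exp (2 * Real.pi * Complex.I * l * k / N)))
        = ∑ k : Fin N, ∑ l : Fin N, ∑ l' : Fin N, (y l * (starRingEnd ℂ) (y l')) *
            Complex.exp (2 * Real.pi * Complex.I * (Int.cast ((l:ℤ) - (l':ℤ)) : ℂ) * k / N) := by
          refine Finset.sum_congr rfl fun k _ => ?_
          rw [_root_.map_sum, Finset.sum_mul_sum]
          refine Finset.sum_congr rfl fun l _ => Finset.sum_congr rfl fun l' _ => ?_
          rw [_root_.map_mul, conj_exp]
          rw [mul_mul_mul_comm, ← Complex.exp_add]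
          congr 1
          push_cast
          ring
      _ = ∑ l : Fin N, ∑ l' : Fin N, (y l * (starRingEnd ℂ) (y l')) *
            (if (N:ℤ) ∣ ((l:ℤ) - (l':ℤ)) then (N:ℂ) else 0) := by
          rw [Finset.sum_comm]
          refine Finset.sum_congr rfl fun l _ => ?_
          rw [Finset.sum_comm]
          refine Finset.sum_congr rfl fun l' _ => ?_
          rw [← Finset.mul_sum, orth N hN]
      _ = ∑ l : Fin N, ∑ l' : Fin N, (if l' = l then (y l * (starRingEnd ℂ) (y l')) * N else 0) := by
          refine Finset.sum_congr rfl fun l _ => Finset.sum_congr rfl fun l' _ => ?_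
          have heq : (N:ℤ) ∣ ((l:ℤ) - (l':ℤ)) ↔ l' = l := by
            constructor
            · intro ⟨d, hd⟩
              have hNZ : (0:ℤ) < N := by exact_mod_cast hN
              have hl : ((l:ℕ):ℤ) < N := by exact_mod_cast l.isLt
              have hl' : ((l':ℕ):ℤ) < N := by exact_mod_cast l'.isLt
              have hl0 : (0:ℤ) ≤ ((l:ℕ):ℤ) := by positivity
              have hl0' : (0:ℤ) ≤ ((l':ℕ):ℤ) := by positivity
              have h1 : (N:ℤ) * d < N * 1 := by rw [mul_one]; linarith
              have h2 : (N:ℤ) * (-1) < N * d := by linarith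
              have hd1 : d < 1 := (mul_lt_mul_iff_right₀ hNZ).mp h1
              have hd2 : -1 < d := (mul_lt_mul_iff_right₀ hNZ).mp h2
              have : d = 0 := by omega
              subst this
              simp only [mul_zero] at hd
              refine (Fin.ext ?_).symm
              omega
            · rintro rfl; simp
          by_cases h : l' = l
          · rw [if_pos (heq.mpr h), if_pos h]
          · rw [if_neg (fun hd => h (heq.mp hd)), if_neg h, mul_zero]
      _ = ∑ l : Fin N, (y l * (starRingEnd ℂ) (y l)) * N := by
          refine Finset.sum_congr rfl fun l _ => ?_
          rw [Finset.sum_ite_eq' univ l]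
          simp
      _ = (N : ℂ) * ∑ l : Fin N, (y l * (starRingEnd ℂ) (y l)) := by
          rw [← Finset.sum_mul, mul_comm]
  simp only [Complex.mul_conj] at main
  exact_mod_cast main

lemma exp_mod (N : ℕ) (hN : 0 < N) (a t : ℕ) :
    Complex.exp (2 * Real.pi * Complex.I * (a:ℂ) * (t:ℂ) / N) =
      Complex.exp (2 * Real.pi * Complex.I * ((a % N : ℕ):ℂ) * (t:ℂ) / N) := by
  have hNC : (N:ℂ) ≠ 0 := Nat.cast_ne_zero.mpr hN.ne'
  have h := Nat.div_add_mod a N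
  set q := a / N with hq
  set r := a % N with hr
  conv_lhs => rw [show a = N * q + r from by omega]
  rw [show (2 * Real.pi * Complex.I * ((N * q + r : ℕ):ℂ) * (t:ℂ) / N) =
      2 * Real.pi * Complex.I * ((r:ℕ):ℂ) * (t:ℂ) / N +
      (((q * t : ℕ):ℤ):ℂ) * (2 * Real.pi * Complex.I) from by push_cast; field_simp; ring]
  rw [Complex.exp_add, Complex.exp_int_mul_two_pi_mul_I, mul_one]

lemma circ_sq_bound (N : ℕ) (hN : 0 < N) (v : Fin N → ℂ) (y : Fin N → ℂ) (M : ℝ)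
    (hM : ∀ t : Fin N, ‖∑ b : Fin N, v b *
      Complex.exp (-(2 * Real.pi * Complex.I * b * t) / N)‖ ≤ M) :
    ∑ j : Fin N, Complex.normSq (∑ l : Fin N,
        v ⟨((j:ℕ) + (l:ℕ)) % N, Nat.mod_lt _ hN⟩ * y l) ≤
      M ^ 2 * ∑ l : Fin N, Complex.normSq (y l) := by
  have hNR : (0:ℝ) < N := by exact_mod_cast hN
  set lam : Fin N → ℂ := fun t => ∑ b : Fin N, v b *
      Complex.exp (-(2 * Real.pi * Complex.I * b * t) / N) with hlam
  set z : Fin N → ℂ := fun t => ∑ l : Fin N, y l *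
      Complex.exp (2 * Real.pi * Complex.I * l * t / N) with hz
  have hsplit : ∀ (t l j : Fin N),
      Complex.exp (2 * Real.pi * Complex.I * ((((j:ℕ) + (l:ℕ)) % N : ℕ):ℂ) * t / N) =
      Complex.exp (2 * Real.pi * Complex.I * l * t / N) *
      Complex.exp (2 * Real.pi * Complex.I * t * j / N) := by
    intro t l j
    rw [← exp_mod N hN ((j:ℕ) + (l:ℕ)) (t:ℕ), ← Complex.exp_add]
    congr 1
    push_cast
    ring
  have step1 : ∀ j : Fin N, ∑ l : Fin N, v ⟨((j:ℕ) + (l:ℕ)) % N, Nat.mod_lt _ hN⟩ * y l =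
      (1/(N:ℂ)) * ∑ t : Fin N, (lam t * z t) *
        Complex.exp (2 * Real.pi * Complex.I * t * j / N) := by
    intro j
    have hterm : ∀ l : Fin N, (1/(N:ℂ)) * (∑ t : Fin N, lam t *
        Complex.exp (2 * Real.pi * Complex.I * ((((j:ℕ) + (l:ℕ)) % N : ℕ):ℂ) * t / N)) =
        v ⟨((j:ℕ) + (l:ℕ)) % N, Nat.mod_lt _ hN⟩ :=
      fun l => inv_dft N hN v ⟨((j:ℕ) + (l:ℕ)) % N, Nat.mod_lt _ hN⟩
    calc ∑ l : Fin N, v ⟨((j:ℕ) + (l:ℕ)) % N, Nat.mod_lt _ hN⟩ * y l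
        = ∑ l : Fin N, ∑ t : Fin N, (1/(N:ℂ)) * (lam t *
            Complex.exp (2 * Real.pi * Complex.I * ((((j:ℕ) + (l:ℕ)) % N : ℕ):ℂ) * t / N)) * y l := by
          refine Finset.sum_congr rfl fun l _ => ?_
          rw [← hterm l, Finset.mul_sum, Finset.sum_mul]
      _ = ∑ t : Fin N, ∑ l : Fin N, (1/(N:ℂ)) * (lam t *
            Complex.exp (2 * Real.pi * Complex.I * ((((j:ℕ) + (l:ℕ)) % N : ℕ):ℂ) * t / N)) * y l :=
          Finset.sum_comm
      _ = ∑ t : Fin N, (1/(N:ℂ)) * ((lam t * z t) *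
            Complex.exp (2 * Real.pi * Complex.I * t * j / N)) := by
          refine Finset.sum_congr rfl fun t _ => ?_
          rw [hz]
          simp only []
          conv_rhs => rw [Finset.mul_sum, Finset.sum_mul, Finset.mul_sum]
          refine Finset.sum_congr rfl fun l _ => ?_
          rw [hsplit t l j]
          ring
      _ = (1/(N:ℂ)) * ∑ t : Fin N, (lam t * z t) *
            Complex.exp (2 * Real.pi * Complex.I * t * j / N) := by
          rw [Finset.mul_sum]
  calc ∑ j : Fin N, Complex.normSq (∑ l : Fin N,
        v ⟨((j:ℕ) + (l:ℕ)) % N, Nat.mod_lt _ hN⟩ * y l)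
      = ∑ j : Fin N, (1/(N:ℝ)^2) * Complex.normSq (∑ t : Fin N, (lam t * z t) *
          Complex.exp (2 * Real.pi * Complex.I * t * j / N)) := by
        refine Finset.sum_congr rfl fun j _ => ?_
        rw [step1 j, Complex.normSq_mul]
        congr 1
        rw [Complex.normSq_div, Complex.normSq_one, Complex.normSq_natCast]
        ring
    _ = (1/(N:ℝ)^2) * ((N:ℝ) * ∑ t : Fin N, Complex.normSq (lam t * z t)) := by
        rw [← Finset.mul_sum, planch N hN (fun t => lam t * z t)]
    _ = (1/(N:ℝ)) * ∑ t : Fin N, Complex.normSq (lam t) * Complex.normSq (z t) := by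
        simp_rw [Complex.normSq_mul]
        field_simp
    _ ≤ (1/(N:ℝ)) * ∑ t : Fin N, M^2 * Complex.normSq (z t) := by
        refine mul_le_mul_of_nonneg_left (Finset.sum_le_sum fun t _ => ?_) (by positivity)
        refine mul_le_mul_of_nonneg_right ?_ (Complex.normSq_nonneg _)
        rw [← Complex.sq_norm]
        exact pow_le_pow_left₀ (norm_nonneg _) (hM t) 2
    _ = M^2 * ((1/(N:ℝ)) * ∑ t : Fin N, Complex.normSq (z t)) := by
        rw [← Finset.mul_sum]
        ring
    _ = M^2 * ((1/(N:ℝ)) * ((N:ℝ) * ∑ l : Fin N, Complex.normSq (y l))) := by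
        rw [planch N hN y]
    _ = M^2 * ∑ l : Fin N, Complex.normSq (y l) := by
        field_simp

end HankelAux

/-- The spectral norm of the `n×n` Hankel matrix of `v ∈ ℂ^{2n-1}` is bounded by the
largest modulus of the discrete Fourier transform of `v`. -/
theorem stmt15 (n : ℕ) (hn : 1 ≤ n) (v : Fin (2*n-1) → ℂ) :
    specNormC (hankelC v) ≤
      ⨆ k : Fin (2*n-1), ‖∑ j : Fin (2*n-1),
        v j * Complex.exp (-(2 * Real.pi * Complex.I * (j:ℕ) * (k:ℕ)) / (2 * n - 1))‖ := by
  classical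
  have hm : 0 < 2*n-1 := by omega
  have hden : (2 * (n:ℂ) - 1) = ((2*n-1 : ℕ) : ℂ) := by
    rw [Nat.cast_sub (by omega : 1 ≤ 2*n)]
    push_cast
    ring
  simp_rw [hden]
  set M := ⨆ k : Fin (2*n-1), ‖∑ j : Fin (2*n-1),
      v j * Complex.exp (-(2 * Real.pi * Complex.I * (j:ℕ) * (k:ℕ)) / ((2*n-1:ℕ):ℂ))‖ with hM
  have hbdd : BddAbove (Set.range fun k : Fin (2*n-1) => ‖∑ j : Fin (2*n-1),
      v j * Complex.exp (-(2 * Real.pi * Complex.I * (j:ℕ) * (k:ℕ)) / ((2*n-1:ℕ):ℂ))‖) :=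
    Set.Finite.bddAbove (Set.finite_range _)
  have hlamM : ∀ t : Fin (2*n-1), ‖∑ j : Fin (2*n-1),
      v j * Complex.exp (-(2 * Real.pi * Complex.I * (j:ℕ) * (t:ℕ)) / ((2*n-1:ℕ):ℂ))‖ ≤ M :=
    fun t => le_ciSup hbdd t
  have hM0 : 0 ≤ M := le_trans (norm_nonneg _) (hlamM ⟨0, hm⟩)
  refine Real.sSup_le ?_ hM0
  rintro c ⟨x, hx, rfl⟩
  -- zero-extension of x
  set y : Fin (2*n-1) → ℂ := fun l => if h : (l:ℕ) < n then x ⟨(l:ℕ), h⟩ else 0 with hy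
  -- the rows of the Hankel matrix agree with the circulant applied to y
  have hrow : ∀ j : Fin n, (hankelC v).mulVec x j =
      ∑ l : Fin (2*n-1), v ⟨((j:ℕ) + (l:ℕ)) % (2*n-1), Nat.mod_lt _ hm⟩ * y l := by
    intro j
    have hjn : (j:ℕ) < n := j.isLt
    set F : ℕ → ℂ := fun l => if h : l < n then v ⟨(j:ℕ) + l, by have := j.isLt; omega⟩ * x ⟨l, h⟩ else 0 with hF
    have hL : (hankelC v).mulVec x j = ∑ l ∈ Finset.range n, F l := by
      rw [← Fin.sum_univ_eq_sum_range]
      simp only [Matrix.mulVec, dotProduct, hankelC, Matrix.of_apply]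
      refine Finset.sum_congr rfl fun k _ => ?_
      rw [hF]
      simp only []
      rw [dif_pos k.isLt]
    have hR : (∑ l : Fin (2*n-1), v ⟨((j:ℕ) + (l:ℕ)) % (2*n-1), Nat.mod_lt _ hm⟩ * y l) =
        ∑ l ∈ Finset.range (2*n-1), F l := by
      rw [← Fin.sum_univ_eq_sum_range]
      refine Finset.sum_congr rfl fun l _ => ?_
      rw [hy, hF]
      simp only []
      by_cases h : (l:ℕ) < n
      · rw [dif_pos h, dif_pos h]
        congr 1
        congr 1
        exact Fin.ext (Nat.mod_eq_of_lt (by have := j.isLt; omega))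
      · rw [dif_neg h, dif_neg h, mul_zero]
    rw [hL, hR]
    refine Finset.sum_subset (Finset.range_subset_range.mpr (by omega)) fun l _ hl => ?_
    rw [hF]
    simp only []
    rw [dif_neg (by simpa using hl)]
  -- sum of squares of x equals sum of squares of y
  have hysum : ∑ l : Fin (2*n-1), Complex.normSq (y l) = ∑ k : Fin n, Complex.normSq (x k) := by
    set F2 : ℕ → ℝ := fun l => if h : l < n then Complex.normSq (x ⟨l, h⟩) else 0 with hF2
    have h1 : ∑ l : Fin (2*n-1), Complex.normSq (y l) = ∑ l ∈ Finset.range (2*n-1), F2 l := by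
      rw [← Fin.sum_univ_eq_sum_range]
      refine Finset.sum_congr rfl fun l _ => ?_
      rw [hy, hF2]
      simp only []
      by_cases h : (l:ℕ) < n
      · rw [dif_pos h, dif_pos h]
      · rw [dif_neg h, dif_neg h, Complex.normSq_zero]
    have h2 : ∑ k : Fin n, Complex.normSq (x k) = ∑ l ∈ Finset.range n, F2 l := by
      rw [← Fin.sum_univ_eq_sum_range]
      refine Finset.sum_congr rfl fun k _ => ?_
      rw [hF2]
      simp only []
      rw [dif_pos k.isLt]
    rw [h1, h2]
    refine (Finset.sum_subset (Finset.range_subset_range.mpr (by omega)) fun l _ hl => ?_).symm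
    rw [hF2]
    simp only []
    rw [dif_neg (by simpa using hl)]
  -- x has sum of squares at most one
  have hx1 : ∑ k : Fin n, Complex.normSq (x k) ≤ 1 := by
    have hS0 : 0 ≤ ∑ k : Fin n, Complex.normSq (x k) :=
      Finset.sum_nonneg fun k _ => Complex.normSq_nonneg _
    have hx' : Real.sqrt (∑ k : Fin n, Complex.normSq (x k)) ≤ 1 := by
      simp only [eNormC] at hx
      simp_rw [Complex.sq_norm] at hx
      exact hx
    nlinarith [Real.sq_sqrt hS0, Real.sqrt_nonneg (∑ k : Fin n, Complex.normSq (x k))]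
  -- main square bound
  have hmain : ∑ j : Fin n, Complex.normSq ((hankelC v).mulVec x j) ≤ M ^ 2 := by
    set g : ℕ → ℝ := fun j => if h : j < 2*n-1 then
        Complex.normSq (∑ l : Fin (2*n-1), v ⟨(j + (l:ℕ)) % (2*n-1), Nat.mod_lt _ hm⟩ * y l)
      else 0 with hg
    have hg0 : ∀ j, 0 ≤ g j := by
      intro j; rw [hg]; simp only []
      split
      · exact Complex.normSq_nonneg _
      · exact le_refl 0
    have hA : ∑ j : Fin n, Complex.normSq ((hankelC v).mulVec x j) = ∑ j ∈ Finset.range n, g j := by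
      rw [← Fin.sum_univ_eq_sum_range]
      refine Finset.sum_congr rfl fun j _ => ?_
      rw [hrow j, hg]
      simp only []
      rw [dif_pos (show (j:ℕ) < 2*n-1 by have := j.isLt; omega)]
    have hB : ∑ j ∈ Finset.range n, g j ≤ ∑ j ∈ Finset.range (2*n-1), g j :=
      Finset.sum_le_sum_of_subset_of_nonneg (Finset.range_subset_range.mpr (by omega))
        (fun i _ _ => hg0 i)
    have hC : ∑ j ∈ Finset.range (2*n-1), g j = ∑ j : Fin (2*n-1), Complex.normSq
        (∑ l : Fin (2*n-1), v ⟨((j:ℕ) + (l:ℕ)) % (2*n-1), Nat.mod_lt _ hm⟩ * y l) := by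
      rw [← Fin.sum_univ_eq_sum_range]
      refine Finset.sum_congr rfl fun j _ => ?_
      rw [hg]
      simp only []
      rw [dif_pos j.isLt]
    have hD := circ_sq_bound (2*n-1) hm v y M hlamM
    rw [hysum] at hD
    calc ∑ j : Fin n, Complex.normSq ((hankelC v).mulVec x j)
        = ∑ j ∈ Finset.range n, g j := hA
      _ ≤ ∑ j ∈ Finset.range (2*n-1), g j := hB
      _ = ∑ j : Fin (2*n-1), Complex.normSq
            (∑ l : Fin (2*n-1), v ⟨((j:ℕ) + (l:ℕ)) % (2*n-1), Nat.mod_lt _ hm⟩ * y l) := hC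
      _ ≤ M ^ 2 * ∑ k : Fin n, Complex.normSq (x k) := hD
      _ ≤ M ^ 2 * 1 := mul_le_mul_of_nonneg_left hx1 (by positivity)
      _ = M ^ 2 := mul_one _
  -- conclude
  simp only [eNormC]
  simp_rw [Complex.sq_norm]
  refine le_trans (Real.sqrt_le_sqrt hmain) ?_
  rw [Real.sqrt_sq hM0]

end
end
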